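/- Let b : {(s,t) : 0 ≤ s ≤ t} → ℕ satisfy b^{s,t} ≥ b^{s,t+1} and b^{s,t} ≤ b^{s+1,t} for relevant indices (monotonicity of persistent Betti numbers). Then for i < j the quantity μ^{i,j} = (b^{i,j−1} − b^{i,j}) − (b^{i−1,j−1} − b^{i−1,j}) satisfies Σ_{i ≤ s, j > t, j ≤ M} μ^{i,j} = b^{s,t} − b^{s,M} for any M ≥ t ≥ s (the fundamental inclusion–exclusion identity of persistence diagrams). -/

import Mathlib

set_option autoImplicit false

private lemma tele_sum (f : ℤ → ℤ) (a : ℤ) :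
    ∀ c : ℤ, a ≤ c → ∑ j ∈ Finset.Icc (a + 1) c, (f (j - 1) - f j) = f a - f c := by
  refine Int.le_induction ?_ ?_
  · simp
  · intro n hn ih
    have hins : Finset.Icc (a + 1) (n + 1) = insert (n + 1) (Finset.Icc (a + 1) n) := by
      ext x; simp [Finset.mem_Icc]; omega
    rw [hins, Finset.sum_insert (by simp [Finset.mem_Icc]), ih]
    have h : n + 1 - 1 = n := by ring
    rw [h]; ring

/-- Let `b s t` be a doubly-indexed family of natural numbers
(persistent Betti numbers), monotone in the sense that `b s (t+1) ≤ b s t` and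
`b s t ≤ b (s+1) t` on relevant indices, with the convention `b s t = 0` for `s ≤ 0`.
Then for the persistence multiplicities
`μ i j = (b i (j−1) − b i j) − (b (i−1) (j−1) − b (i−1) j)` one has, for `s ≤ t ≤ M`:
`Σ_{i ≤ s, t < j ≤ M} μ i j = b s t − b s M`. -/
theorem persistence_inclusion_exclusion (b : ℤ → ℤ → ℕ)
    (hb_zero : ∀ s t : ℤ, s ≤ 0 → b s t = 0)
    (hb_mono_t : ∀ s t : ℤ, 0 ≤ s → s ≤ t → b s (t + 1) ≤ b s t)
    (hb_mono_s : ∀ s t : ℤ, 0 ≤ s → s + 1 ≤ t → b s t ≤ b (s + 1) t)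
    (s t M : ℤ) (hs : 0 ≤ s) (hst : s ≤ t) (htM : t ≤ M) :
    (∑ i ∈ Finset.Icc (0 : ℤ) s, ∑ j ∈ Finset.Icc (t + 1) M,
        (((b i (j - 1) : ℤ) - (b i j : ℤ)) - ((b (i - 1) (j - 1) : ℤ) - (b (i - 1) j : ℤ)))) =
      (b s t : ℤ) - (b s M : ℤ) := by
  have inner : ∀ i : ℤ, (∑ j ∈ Finset.Icc (t + 1) M,
      (((b i (j - 1) : ℤ) - (b i j : ℤ)) - ((b (i - 1) (j - 1) : ℤ) - (b (i - 1) j : ℤ)))) =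
      ((b i t : ℤ) - (b i M : ℤ)) - ((b (i - 1) t : ℤ) - (b (i - 1) M : ℤ)) := by
    intro i
    have h := tele_sum (fun j => (b i j : ℤ) - (b (i - 1) j : ℤ)) t M htM
    have h2 : (∑ j ∈ Finset.Icc (t + 1) M,
        (((b i (j - 1) : ℤ) - (b i j : ℤ)) - ((b (i - 1) (j - 1) : ℤ) - (b (i - 1) j : ℤ)))) =
        ∑ x ∈ Finset.Icc (t + 1) M,
          (((b i (x - 1) : ℤ) - (b (i - 1) (x - 1) : ℤ)) - ((b i x : ℤ) - (b (i - 1) x : ℤ))) :=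
      Finset.sum_congr rfl (fun x _ => by ring)
    rw [h2, h]; ring
  have outer := tele_sum (fun i => (b i M : ℤ) - (b i t : ℤ)) (-1) s (by omega)
  rw [show ((-1 : ℤ) + 1) = 0 by ring] at outer
  calc (∑ i ∈ Finset.Icc (0 : ℤ) s, ∑ j ∈ Finset.Icc (t + 1) M,
        (((b i (j - 1) : ℤ) - (b i j : ℤ)) - ((b (i - 1) (j - 1) : ℤ) - (b (i - 1) j : ℤ))))
      = ∑ i ∈ Finset.Icc (0 : ℤ) s,
          (((b (i - 1) M : ℤ) - (b (i - 1) t : ℤ)) - ((b i M : ℤ) - (b i t : ℤ))) := by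
        apply Finset.sum_congr rfl
        intro i _
        rw [inner i]; ring
    _ = ((b (-1) M : ℤ) - (b (-1) t : ℤ)) - ((b s M : ℤ) - (b s t : ℤ)) := outer
    _ = (b s t : ℤ) - (b s M : ℤ) := by
        rw [hb_zero (-1) M (by omega), hb_zero (-1) t (by omega)]; push_cast; ring
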